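/- Let f : ℝⁿ → ℝ̄ be an arbitrary function and define its approximate lower limit f̲(x) = ap liminf_{y→x} f(y) = sup{t ∈ ℝ : the Lebesgue density of {y : f(y) < t} at x is 0}. Then f̲ is a Borel measurable function. -/

import Mathlib

open Set Filter Metric MeasureTheory Topology ENNReal

noncomputable section

abbrev Euc (n : ℕ) := EuclideanSpace ℝ (Fin n)

def IsNorm {n : ℕ} (φ : Euc n → ℝ) : Prop :=
  (∀ x, φ x = 0 ↔ x = 0) ∧ (∀ (c : ℝ) (x : Euc n), φ (c • x) = |c| * φ x) ∧
    (∀ x y, φ (x + y) ≤ φ x + φ y)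

def StrictlyConvexNorm {n : ℕ} (φ : Euc n → ℝ) : Prop :=
  IsNorm φ ∧ ∀ a b, φ (a + b) = φ a + φ b → φ b • a = φ a • b

def UniformlyConvexNorm {n : ℕ} (φ : Euc n → ℝ) : Prop :=
  IsNorm φ ∧ ∃ γ : ℝ, 0 < γ ∧ ConvexOn ℝ Set.univ (fun x => φ x - γ * ‖x‖)

def distφ {n : ℕ} (φ : Euc n → ℝ) (K : Set (Euc n)) (x : Euc n) : ℝ :=
  sInf {r | ∃ y ∈ K, r = φ (x - y)}

def nearφ {n : ℕ} (φ : Euc n → ℝ) (K : Set (Euc n)) (x : Euc n) : Set (Euc n) :=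
  {a ∈ K | φ (x - a) = distφ φ K x}

def rhoφ {n : ℕ} (φ : Euc n → ℝ) (K : Set (Euc n)) (x : Euc n) : ℝ≥0∞ :=
  sSup {r : ℝ≥0∞ | ∃ s : ℝ, ∃ a ∈ nearφ φ K x,
    r = ENNReal.ofReal s ∧ distφ φ K (a + s • (x - a)) = s * distφ φ K x}

def normalBundle {n : ℕ} (φ : Euc n → ℝ) (K : Set (Euc n)) : Set (Euc n × Euc n) :=
  {p | p.1 ∈ K ∧ φ p.2 = 1 ∧ ∃ s : ℝ, 0 < s ∧ distφ φ K (p.1 + s • p.2) = s}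

def reachφ {n : ℕ} (φ : Euc n → ℝ) (K : Set (Euc n)) (p : Euc n × Euc n) : ℝ≥0∞ :=
  sSup {r : ℝ≥0∞ | ∃ s : ℝ, 0 < s ∧ r = ENNReal.ofReal s ∧ distφ φ K (p.1 + s • p.2) = s}

def cutLocus {n : ℕ} (φ : Euc n → ℝ) (K : Set (Euc n)) : Set (Euc n) :=
  {x | ∃ p ∈ normalBundle φ K, reachφ φ K p ≠ ⊤ ∧
    x = p.1 + (reachφ φ K p).toReal • p.2}

def PtTwiceDiffAt {n : ℕ} (f : Euc n → ℝ) (x : Euc n) : Prop :=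
  ∃ (L : Euc n →L[ℝ] ℝ) (Q : Euc n →L[ℝ] Euc n →L[ℝ] ℝ),
    Tendsto (fun y => |f y - f x - L (y - x) - Q (y - x) (y - x)| / ‖y - x‖ ^ 2)
      (𝓝[≠] x) (𝓝 0)

def densityZeroAt {n : ℕ} (A : Set (Euc n)) (x : Euc n) : Prop :=
  Tendsto (fun r : ℝ => volume (A ∩ Metric.ball x r) / volume (Metric.ball x r))
    (𝓝[>] 0) (𝓝 0)

lemma densityZeroAt_mono {n : ℕ} {A B : Set (Euc n)} (h : A ⊆ B) {x : Euc n}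
    (hB : densityZeroAt B x) : densityZeroAt A x := by
  refine tendsto_of_tendsto_of_tendsto_of_le_of_le tendsto_const_nhds hB
    (fun r => zero_le) (fun r => ?_)
  exact ENNReal.div_le_div_right (measure_mono (inter_subset_inter_left _ h)) _

lemma densityZeroAt_iff_rat {n : ℕ} (A : Set (Euc n)) (x : Euc n) :
    densityZeroAt A x ↔ ∀ ε : ℚ, 0 < ε → ∃ δ : ℚ, 0 < δ ∧ ∀ q : ℚ, 0 < q → q < δ →
      volume (A ∩ Metric.ball x (q : ℝ)) / volume (Metric.ball x (q : ℝ))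
        < ENNReal.ofReal ε := by
  constructor
  · intro h ε hε
    have hev : ∀ᶠ r : ℝ in 𝓝[>] 0,
        volume (A ∩ Metric.ball x r) / volume (Metric.ball x r) < ENNReal.ofReal ε := by
      refine h.eventually (gt_mem_nhds ?_)
      exact ENNReal.ofReal_pos.2 (by exact_mod_cast hε)
    rcases mem_nhdsGT_iff_exists_Ioo_subset.1 hev with ⟨u, hu, hsub⟩
    have hu0 : (0:ℝ) < u := hu
    obtain ⟨δ, hδ0, hδu⟩ := exists_rat_btwn hu0
    refine ⟨δ, by exact_mod_cast hδ0, fun q hq hqδ => ?_⟩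
    exact hsub ⟨by exact_mod_cast hq, lt_trans (by exact_mod_cast hqδ) hδu⟩
  · intro h
    set d := Module.finrank ℝ (Euc n)
    unfold densityZeroAt
    rw [ENNReal.tendsto_nhds_zero]
    intro ε₀ hε₀
    -- choose rational ε with ofReal ε * ofReal (2^d) ≤ ε₀
    have h2 : (0:ℝ) < 2 ^ d := by positivity
    set b : ℝ≥0∞ := min 1 (ε₀ / ENNReal.ofReal (2 ^ d)) with hb
    have hbpos : 0 < b := by
      refine lt_min one_pos ?_
      exact ENNReal.div_pos hε₀.ne' ENNReal.ofReal_ne_top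
    have hbne : b ≠ ⊤ := ne_top_of_le_ne_top one_ne_top (min_le_left _ _)
    have hbtoReal : 0 < b.toReal := ENNReal.toReal_pos hbpos.ne' hbne
    obtain ⟨ε, hε0, hεb⟩ := exists_rat_btwn hbtoReal
    have hε0' : (0:ℚ) < ε := by exact_mod_cast hε0
    have hofε : ENNReal.ofReal ε < b := by
      have := ENNReal.ofReal_lt_ofReal_iff hbtoReal |>.2 hεb
      rwa [ENNReal.ofReal_toReal hbne] at this
    have hkey : ENNReal.ofReal ε * ENNReal.ofReal (2 ^ d) ≤ ε₀ := by
      have h1 : ENNReal.ofReal ε ≤ ε₀ / ENNReal.ofReal (2 ^ d) :=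
        le_trans hofε.le (min_le_right _ _)
      have hc0 : ENNReal.ofReal (2 ^ d) ≠ 0 := by
        simp [ENNReal.ofReal_eq_zero, not_le, h2]
      exact (ENNReal.le_div_iff_mul_le (Or.inl hc0) (Or.inl ENNReal.ofReal_ne_top)).1 h1
    obtain ⟨δ, hδ0, hδ⟩ := h ε hε0'
    have hδ0' : (0:ℝ) < (δ:ℝ)/2 := by positivity
    filter_upwards [Ioo_mem_nhdsGT_of_mem (by exact ⟨le_refl _, hδ0'⟩ : (0:ℝ) ∈ Ico 0 ((δ:ℝ)/2))]
      with r hr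
    obtain ⟨hr0, hrδ⟩ := hr
    -- pick rational q with r < q < min (2r) δ
    have hrlt : r < min (2*r) (δ:ℝ) := by
      refine lt_min (by linarith) (by linarith)
    obtain ⟨q, hq1, hq2⟩ := exists_rat_btwn hrlt
    have hq0 : (0:ℚ) < q := by exact_mod_cast lt_trans hr0 hq1
    have hqδ : q < δ := by exact_mod_cast lt_of_lt_of_le hq2 (min_le_right _ _)
    have hq2r : (q:ℝ) < 2*r := lt_of_lt_of_le hq2 (min_le_left _ _)
    have hmain := hδ q hq0 hqδ
    have hvq0 : volume (Metric.ball x (q:ℝ)) ≠ 0 :=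
      (measure_ball_pos volume x (by exact_mod_cast hq0)).ne'
    have hvqtop : volume (Metric.ball x (q:ℝ)) ≠ ⊤ := measure_ball_lt_top.ne
    have hnum : volume (A ∩ Metric.ball x (q:ℝ))
        < ENNReal.ofReal ε * volume (Metric.ball x (q:ℝ)) :=
      (ENNReal.div_lt_iff (Or.inl hvq0) (Or.inl hvqtop)).1 hmain
    -- v(q) ≤ ofReal (2^d) * v(r)
    have hvscale : volume (Metric.ball x (q:ℝ)) ≤
        ENNReal.ofReal (2 ^ d) * volume (Metric.ball x r) := by
      have h2r : volume (Metric.ball x (2*r)) =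
          ENNReal.ofReal ((2*r) ^ d) * volume (Metric.ball (0:Euc n) 1) :=
        Measure.addHaar_ball_of_pos volume x (by linarith)
      have hrr : volume (Metric.ball x r) =
          ENNReal.ofReal (r ^ d) * volume (Metric.ball (0:Euc n) 1) :=
        Measure.addHaar_ball_of_pos volume x hr0
      calc volume (Metric.ball x (q:ℝ)) ≤ volume (Metric.ball x (2*r)) :=
            measure_mono (Metric.ball_subset_ball hq2r.le)
        _ = ENNReal.ofReal (2 ^ d * r ^ d) * volume (Metric.ball (0:Euc n) 1) := by
            rw [h2r, mul_pow]
        _ = ENNReal.ofReal (2 ^ d) * volume (Metric.ball x r) := by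
            rw [hrr, ENNReal.ofReal_mul (by positivity), mul_assoc]
    have hnum2 : volume (A ∩ Metric.ball x r)
        ≤ volume (Metric.ball x r) * (ENNReal.ofReal ε * ENNReal.ofReal (2 ^ d)) := by
      calc volume (A ∩ Metric.ball x r) ≤ volume (A ∩ Metric.ball x (q:ℝ)) :=
            measure_mono (inter_subset_inter_right _ (Metric.ball_subset_ball hq1.le))
        _ ≤ ENNReal.ofReal ε * volume (Metric.ball x (q:ℝ)) := hnum.le
        _ ≤ ENNReal.ofReal ε * (ENNReal.ofReal (2 ^ d) * volume (Metric.ball x r)) :=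
            mul_le_mul_right hvscale _
        _ = volume (Metric.ball x r) * (ENNReal.ofReal ε * ENNReal.ofReal (2 ^ d)) := by
            ring
    have hvr0 : volume (Metric.ball x r) ≠ 0 := (measure_ball_pos volume x hr0).ne'
    have hvrtop : volume (Metric.ball x r) ≠ ⊤ := measure_ball_lt_top.ne
    calc volume (A ∩ Metric.ball x r) / volume (Metric.ball x r)
        ≤ ENNReal.ofReal ε * ENNReal.ofReal (2 ^ d) := by
          exact ENNReal.div_le_of_le_mul' hnum2
      _ ≤ ε₀ := hkey

lemma measurable_vol_inter_ball {n : ℕ} {B : Set (Euc n)} (hB : MeasurableSet B) (q : ℝ) :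
    Measurable fun x : Euc n => volume (B ∩ Metric.ball x q) := by
  have hs : MeasurableSet {p : Euc n × Euc n | p.2 ∈ B ∧ dist p.2 p.1 < q} := by
    refine (hB.preimage measurable_snd).inter ?_
    exact (isOpen_lt (continuous_dist.comp (continuous_snd.prodMk continuous_fst))
      continuous_const).measurableSet
  have h2 : Measurable fun x : Euc n =>
      (volume : Measure (Euc n)) (Prod.mk x ⁻¹' {p : Euc n × Euc n | p.2 ∈ B ∧ dist p.2 p.1 < q}) :=
    measurable_measure_prodMk_left hs
  have hset : ∀ x : Euc n, B ∩ Metric.ball x q =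
      Prod.mk x ⁻¹' {p : Euc n × Euc n | p.2 ∈ B ∧ dist p.2 p.1 < q} := by
    intro x; ext y; simp [Metric.mem_ball]
  simp only [hset]
  exact h2

lemma measurable_vol_ball {n : ℕ} (q : ℝ) :
    Measurable fun x : Euc n => volume (Metric.ball x q) := by
  have : (fun x : Euc n => volume (Metric.ball x q)) =
      fun _ => volume (Metric.ball (0 : Euc n) q) :=
    funext fun x => Measure.addHaar_ball_center volume x q
  rw [this]
  exact measurable_const

lemma measurableSet_densityZeroAt {n : ℕ} {B : Set (Euc n)} (hB : MeasurableSet B) :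
    MeasurableSet {x : Euc n | densityZeroAt B x} := by
  have heq : {x : Euc n | densityZeroAt B x} =
      ⋂ ε : ℚ, ⋂ _ : 0 < ε, ⋃ δ : ℚ, ⋃ _ : 0 < δ, ⋂ q : ℚ, ⋂ _ : 0 < q, ⋂ _ : q < δ,
        {x : Euc n | volume (B ∩ Metric.ball x (q:ℝ)) / volume (Metric.ball x (q:ℝ))
          < ENNReal.ofReal ε} := by
    ext x
    simp only [mem_setOf_eq, densityZeroAt_iff_rat, mem_iInter, mem_iUnion]
    constructor
    · intro h ε hε
      obtain ⟨δ, hδ, hδ'⟩ := h ε hε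
      exact ⟨δ, hδ, fun q hq hqδ => hδ' q hq hqδ⟩
    · intro h ε hε
      obtain ⟨δ, hδ, hδ'⟩ := h ε hε
      exact ⟨δ, hδ, fun q hq hqδ => hδ' q hq hqδ⟩
  rw [heq]
  refine MeasurableSet.iInter fun ε => MeasurableSet.iInter fun _ =>
    MeasurableSet.iUnion fun δ => MeasurableSet.iUnion fun _ =>
    MeasurableSet.iInter fun q => MeasurableSet.iInter fun _ =>
    MeasurableSet.iInter fun _ => ?_
  exact measurableSet_lt ((measurable_vol_inter_ball hB _).div (measurable_vol_ball _))
    measurable_const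

lemma densityZeroAt_toMeasurable {n : ℕ} (A : Set (Euc n)) (x : Euc n) :
    densityZeroAt A x ↔ densityZeroAt (toMeasurable volume A) x := by
  unfold densityZeroAt
  have : ∀ r : ℝ, volume (toMeasurable volume A ∩ Metric.ball x r)
      = volume (A ∩ Metric.ball x r) := fun r =>
    Measure.measure_toMeasurable_inter_of_sFinite measurableSet_ball A
  simp only [this]

theorem stmt16 {n : ℕ} (f : Euc n → EReal) :
    Measurable (fun x : Euc n => sSup {s : EReal | ∃ t : ℝ, s = (t : EReal) ∧
      densityZeroAt {y | f y < (t : EReal)} x}) := by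
  apply measurable_of_Ioi
  intro a
  have heq : (fun x : Euc n => sSup {s : EReal | ∃ t : ℝ, s = (t : EReal) ∧
      densityZeroAt {y | f y < (t : EReal)} x}) ⁻¹' Ioi a =
      ⋃ q : ℚ, ⋃ _ : a < ((q:ℝ) : EReal),
        {x : Euc n | densityZeroAt {y | f y < (((q:ℝ)) : EReal)} x} := by
    ext x
    simp only [mem_preimage, mem_Ioi, mem_iUnion, mem_setOf_eq]
    constructor
    · intro h
      rcases lt_sSup_iff.1 h with ⟨s, hs, has⟩
      rcases hs with ⟨t, rfl, ht⟩
      rcases EReal.exists_rat_btwn_of_lt has with ⟨q, haq, hqt⟩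
      refine ⟨q, haq, densityZeroAt_mono ?_ ht⟩
      intro y hy
      simp only [mem_setOf_eq] at hy ⊢
      exact lt_trans hy (by exact_mod_cast hqt)
    · rintro ⟨q, haq, hq⟩
      refine lt_of_lt_of_le haq (le_sSup ?_)
      exact ⟨(q:ℝ), rfl, hq⟩
  rw [heq]
  refine MeasurableSet.iUnion fun q => MeasurableSet.iUnion fun _ => ?_
  have : {x : Euc n | densityZeroAt {y | f y < (((q:ℝ)) : EReal)} x} =
      {x : Euc n | densityZeroAt (toMeasurable volume {y | f y < (((q:ℝ)) : EReal)}) x} := by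
    ext x; exact densityZeroAt_toMeasurable _ x
  rw [this]
  exact measurableSet_densityZeroAt (measurableSet_toMeasurable _ _)
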